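/- Let n ≥ 1, let k > 0 and κ > 0 be real constants, and let H and X₁, …, X_m be Hermitian complex n×n matrices. Then the system function Δ defined on {(T, α) ∈ ℝ × ℝ^m : T > 0} by Δ(T, α) = κ·T·log Re trace(exp(−(H − ∑ⱼ αⱼ·Xⱼ)/(k·T))) is a convex function of (T, α) on this set. -/

import Mathlib

open Matrix

section Aux

variable {n : ℕ}

lemma exp_hermitian (N : Matrix (Fin n) (Fin n) ℂ) (hN : N.IsHermitian) :
    NormedSpace.exp N = (hN.eigenvectorUnitary : Matrix (Fin n) (Fin n) ℂ)
      * diagonal (Complex.ofReal ∘ Real.exp ∘ hN.eigenvalues)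
      * star (hN.eigenvectorUnitary : Matrix (Fin n) (Fin n) ℂ) := by
  set V := (hN.eigenvectorUnitary : Matrix (Fin n) (Fin n) ℂ) with hV
  have h1 : star V * V = 1 := Unitary.coe_star_mul_self hN.eigenvectorUnitary
  have hinv : V⁻¹ = star V := inv_eq_left_inv h1
  have hu : IsUnit V := ⟨Unitary.toUnits hN.eigenvectorUnitary, rfl⟩
  conv_lhs => rw [hN.spectral_theorem, Unitary.conjStarAlgAut_apply, ← hV, ← hinv]
  rw [Matrix.exp_conj V _ hu, Matrix.exp_diagonal, hinv]
  have : NormedSpace.exp ((RCLike.ofReal : ℝ → ℂ) ∘ hN.eigenvalues)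
      = Complex.ofReal ∘ Real.exp ∘ hN.eigenvalues := by
    funext i
    rw [Pi.exp_def]
    simp only [Function.comp_apply, ← Complex.exp_eq_exp_ℂ, Complex.ofReal_exp]
    rfl
  rw [this]

lemma conj_diag_apply (V : Matrix (Fin n) (Fin n) ℂ) (d : Fin n → ℂ) (i : Fin n) :
    (V * diagonal d * star V) i i = ∑ j, d j * (V i j * star (V i j)) := by
  simp [Matrix.mul_apply, Matrix.diagonal, Matrix.star_apply, Finset.mul_sum]
  congr 1; funext j
  ring

lemma conj_diag_re (V : Matrix (Fin n) (Fin n) ℂ) (lam : Fin n → ℝ) (i : Fin n) :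
    ((V * diagonal (Complex.ofReal ∘ lam) * star V) i i).re
      = ∑ j, Complex.normSq (V i j) * lam j := by
  rw [conj_diag_apply, Complex.re_sum]
  congr 1; funext j
  have : V i j * star (V i j) = (Complex.normSq (V i j) : ℂ) := Complex.mul_conj _
  rw [this]
  simp [mul_comm]

lemma trace_exp_re (N : Matrix (Fin n) (Fin n) ℂ) (hN : N.IsHermitian) :
    (Matrix.trace (NormedSpace.exp N)).re = ∑ i, Real.exp (hN.eigenvalues i) := by
  rw [exp_hermitian N hN]
  rw [Matrix.trace_mul_cycle]
  rw [show (star (hN.eigenvectorUnitary : Matrix (Fin n) (Fin n) ℂ))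
        * (hN.eigenvectorUnitary : Matrix (Fin n) (Fin n) ℂ) = 1 from
      Unitary.coe_star_mul_self hN.eigenvectorUnitary, one_mul,
    Matrix.trace_diagonal, Complex.re_sum]
  simp [← Complex.ofReal_exp]

lemma row_normSq (N : Matrix (Fin n) (Fin n) ℂ) (hN : N.IsHermitian) (i : Fin n) :
    ∑ j, Complex.normSq ((hN.eigenvectorUnitary : Matrix (Fin n) (Fin n) ℂ) i j) = 1 := by
  have h : ((hN.eigenvectorUnitary : Matrix (Fin n) (Fin n) ℂ)
      * star (hN.eigenvectorUnitary : Matrix (Fin n) (Fin n) ℂ)) i i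
      = (1 : Matrix (Fin n) (Fin n) ℂ) i i := by
    rw [(Matrix.mem_unitaryGroup_iff).mp hN.eigenvectorUnitary.2]
  rw [Matrix.mul_apply] at h
  have := congrArg Complex.re h
  rw [Complex.re_sum] at this
  simpa [Matrix.star_apply, Matrix.one_apply, Complex.mul_conj] using this

lemma peierls (N : Matrix (Fin n) (Fin n) ℂ) (hN : N.IsHermitian) :
    ∑ i, Real.exp ((N i i).re) ≤ (Matrix.trace (NormedSpace.exp N)).re := by
  set V := (hN.eigenvectorUnitary : Matrix (Fin n) (Fin n) ℂ) with hV
  have hdiagN : ∀ i, (N i i).re = ∑ j, Complex.normSq (V i j) * hN.eigenvalues j := by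
    intro i
    conv_lhs => rw [hN.spectral_theorem, Unitary.conjStarAlgAut_apply]
    exact conj_diag_re V hN.eigenvalues i
  have hdiagE : ∀ i, ((NormedSpace.exp N) i i).re
      = ∑ j, Complex.normSq (V i j) * Real.exp (hN.eigenvalues j) := by
    intro i
    conv_lhs => rw [exp_hermitian N hN]
    exact conj_diag_re V (Real.exp ∘ hN.eigenvalues) i
  have htr : (Matrix.trace (NormedSpace.exp N)).re
      = ∑ i, ((NormedSpace.exp N) i i).re := by
    rw [Matrix.trace, Complex.re_sum]; rfl
  rw [htr]
  apply Finset.sum_le_sum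
  intro i _
  rw [hdiagN i, hdiagE i]
  have hJ := convexOn_exp.map_sum_le (t := Finset.univ)
    (w := fun j => Complex.normSq (V i j)) (p := fun j => hN.eigenvalues j)
    (fun j _ => Complex.normSq_nonneg _) (row_normSq N hN i) (fun j _ => Set.mem_univ _)
  simpa [smul_eq_mul] using hJ

lemma trace_exp_pos (hn : 1 ≤ n) (N : Matrix (Fin n) (Fin n) ℂ) (hN : N.IsHermitian) :
    0 < (Matrix.trace (NormedSpace.exp N)).re := by
  rw [trace_exp_re N hN]
  apply Finset.sum_pos (fun i _ => Real.exp_pos _)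
  have : Nonempty (Fin n) := Fin.pos_iff_nonempty.mp hn
  exact Finset.univ_nonempty

lemma hermitian_conj (M : Matrix (Fin n) (Fin n) ℂ) (hM : M.IsHermitian)
    (V : Matrix.unitaryGroup (Fin n) ℂ) :
    (star (V : Matrix (Fin n) (Fin n) ℂ) * M * (V : Matrix (Fin n) (Fin n) ℂ)).IsHermitian := by
  unfold Matrix.IsHermitian
  rw [Matrix.conjTranspose_mul, Matrix.conjTranspose_mul, hM.eq]
  simp [Matrix.star_eq_conjTranspose, mul_assoc]

lemma trace_exp_conj (M : Matrix (Fin n) (Fin n) ℂ) (V : Matrix.unitaryGroup (Fin n) ℂ) :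
    Matrix.trace (NormedSpace.exp (star (V : Matrix (Fin n) (Fin n) ℂ) * M
      * (V : Matrix (Fin n) (Fin n) ℂ))) = Matrix.trace (NormedSpace.exp M) := by
  set W := (V : Matrix (Fin n) (Fin n) ℂ)
  have h1 : star W * W = 1 := Unitary.coe_star_mul_self V
  have hinv : W⁻¹ = star W := inv_eq_left_inv h1
  have hu : IsUnit W := ⟨Unitary.toUnits V, rfl⟩
  rw [← hinv, Matrix.exp_conj' W _ hu, hinv]
  rw [Matrix.trace_mul_cycle, show W * star W = 1 from (Matrix.mem_unitaryGroup_iff).mp V.2,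
    one_mul]

variable {n : ℕ}

lemma holder_two (x y : Fin n → ℝ) (hx : ∀ i, 0 ≤ x i) (hy : ∀ i, 0 ≤ y i)
    {θ : ℝ} (hθ : 0 < θ) (hθ1 : θ < 1) :
    ∑ i, x i ^ θ * y i ^ (1 - θ) ≤ (∑ i, x i) ^ θ * (∑ i, y i) ^ (1 - θ) := by
  have hθ1' : 0 < 1 - θ := by linarith
  have hpq : Real.HolderConjugate (1/θ) (1/(1-θ)) := by
    rw [Real.holderConjugate_iff]
    constructor
    · rw [lt_div_iff₀ hθ]; linarith
    · rw [one_div, one_div, inv_inv, inv_inv]; ring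
  have h := Real.inner_le_Lp_mul_Lq_of_nonneg (s := Finset.univ)
    (f := fun i => x i ^ θ) (g := fun i => y i ^ (1-θ)) hpq
    (fun i _ => Real.rpow_nonneg (hx i) _) (fun i _ => Real.rpow_nonneg (hy i) _)
  have e1 : ∀ i : Fin n, ((x i ^ θ) ^ (1/θ) : ℝ) = x i := fun i => by
    rw [← Real.rpow_mul (hx i), mul_one_div_cancel hθ.ne', Real.rpow_one]
  have e2 : ∀ i : Fin n, ((y i ^ (1-θ)) ^ (1/(1-θ)) : ℝ) = y i := fun i => by
    rw [← Real.rpow_mul (hy i), mul_one_div_cancel hθ1'.ne', Real.rpow_one]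
  simp only [e1, e2] at h
  have hd1 : (1:ℝ)/(1/θ) = θ := by field_simp
  have hd2 : (1:ℝ)/(1/(1-θ)) = 1-θ := by field_simp
  rw [hd1, hd2] at h
  exact h

lemma perspective_lse (hn : 1 ≤ n) {T₁ T₂ a b : ℝ} (hT₁ : 0 < T₁) (hT₂ : 0 < T₂)
    (ha : 0 < a) (hb : 0 < b) (hab : a + b = 1) (f₁ f₂ : Fin n → ℝ) :
    (a*T₁+b*T₂) * Real.log (∑ i, Real.exp ((a*T₁*f₁ i + b*T₂*f₂ i)/(a*T₁+b*T₂)))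
      ≤ a*T₁*Real.log (∑ i, Real.exp (f₁ i)) + b*T₂*Real.log (∑ i, Real.exp (f₂ i)) := by
  have hne : (Finset.univ : Finset (Fin n)).Nonempty := by
    have : Nonempty (Fin n) := Fin.pos_iff_nonempty.mp hn
    exact Finset.univ_nonempty
  set Tr := a*T₁+b*T₂ with hTrdef
  have hTr : 0 < Tr := by positivity
  set θ := a*T₁/Tr with hθdef
  have hθ : 0 < θ := by positivity
  have hθ1 : θ < 1 := by
    rw [hθdef, div_lt_one hTr, hTrdef]; nlinarith
  have h1θ : 1 - θ = b*T₂/Tr := by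
    rw [hθdef, eq_div_iff hTr.ne', sub_mul, div_mul_cancel₀ _ hTr.ne', one_mul, hTrdef]; ring
  have hexp : ∀ i, Real.exp ((a*T₁*f₁ i + b*T₂*f₂ i)/Tr)
      = (Real.exp (f₁ i)) ^ θ * (Real.exp (f₂ i)) ^ (1-θ) := by
    intro i
    rw [← Real.exp_mul, ← Real.exp_mul, ← Real.exp_add]
    congr 1
    rw [h1θ, hθdef]
    field_simp
  have hS1 : 0 < ∑ i, Real.exp (f₁ i) := Finset.sum_pos (fun i _ => Real.exp_pos _) hne
  have hS2 : 0 < ∑ i, Real.exp (f₂ i) := Finset.sum_pos (fun i _ => Real.exp_pos _) hne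
  have hsum : ∑ i, Real.exp ((a*T₁*f₁ i + b*T₂*f₂ i)/Tr)
      ≤ (∑ i, Real.exp (f₁ i)) ^ θ * (∑ i, Real.exp (f₂ i)) ^ (1-θ) := by
    calc ∑ i, Real.exp ((a*T₁*f₁ i + b*T₂*f₂ i)/Tr)
        = ∑ i, (Real.exp (f₁ i)) ^ θ * (Real.exp (f₂ i)) ^ (1-θ) := by
          exact Finset.sum_congr rfl fun i _ => hexp i
      _ ≤ _ := holder_two _ _ (fun i => (Real.exp_pos _).le) (fun i => (Real.exp_pos _).le) hθ hθ1
  have hpos : 0 < ∑ i, Real.exp ((a*T₁*f₁ i + b*T₂*f₂ i)/Tr) :=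
    Finset.sum_pos (fun i _ => Real.exp_pos _) hne
  have hlog := Real.log_le_log hpos hsum
  rw [Real.log_mul (Real.rpow_pos_of_pos hS1 _).ne' (Real.rpow_pos_of_pos hS2 _).ne',
    Real.log_rpow hS1, Real.log_rpow hS2] at hlog
  calc Tr * Real.log (∑ i, Real.exp ((a*T₁*f₁ i + b*T₂*f₂ i)/Tr))
      ≤ Tr * (θ * Real.log (∑ i, Real.exp (f₁ i)) + (1-θ) * Real.log (∑ i, Real.exp (f₂ i))) := by
        exact mul_le_mul_of_nonneg_left hlog hTr.le
    _ = a*T₁*Real.log (∑ i, Real.exp (f₁ i)) + b*T₂*Real.log (∑ i, Real.exp (f₂ i)) := by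
        rw [h1θ, hθdef]
        field_simp


end Aux


/-- The system function
`Δ(T, α) = κ·T·log Re tr(exp(-(H - ∑ⱼ αⱼ·Xⱼ)/(k·T)))` is a convex function of `(T, α)` on
the region `T > 0`. -/
theorem system_function_convex
    {n m : ℕ} (hn : 1 ≤ n) (k κ : ℝ) (hk : 0 < k) (hκ : 0 < κ)
    (H : Matrix (Fin n) (Fin n) ℂ) (X : Fin m → Matrix (Fin n) (Fin n) ℂ)
    (hH : H.IsHermitian) (hX : ∀ j, (X j).IsHermitian) :
    ConvexOn ℝ {p : ℝ × (Fin m → ℝ) | 0 < p.1}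
      (fun p : ℝ × (Fin m → ℝ) =>
        κ * p.1 * Real.log ((Matrix.trace (NormedSpace.exp
          (-((k * p.1)⁻¹ • (H - ∑ j, p.2 j • X j))))).re)) := by
  set M : (ℝ × (Fin m → ℝ)) → Matrix (Fin n) (Fin n) ℂ :=
    fun x => (k * x.1)⁻¹ • ((∑ j, x.2 j • X j) - H) with hMdef
  have hobj : ∀ x : ℝ × (Fin m → ℝ),
      -((k * x.1)⁻¹ • (H - ∑ j, x.2 j • X j)) = M x := by
    intro x; rw [← smul_neg, neg_sub]
  have hM : ∀ x : ℝ × (Fin m → ℝ), (M x).IsHermitian := by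
    intro x
    have hs : (∑ j, x.2 j • X j).IsHermitian := by
      unfold Matrix.IsHermitian
      rw [Matrix.conjTranspose_sum]
      exact Finset.sum_congr rfl fun j _ => by
        rw [Matrix.conjTranspose_smul, star_trivial, (hX j).eq]
    have hsub : ((∑ j, x.2 j • X j) - H).IsHermitian := hs.sub hH
    unfold Matrix.IsHermitian
    rw [hMdef]
    simp only []
    rw [Matrix.conjTranspose_smul, star_trivial, hsub.eq]
  constructor
  · exact convex_halfSpace_gt ⟨fun _ _ => rfl, fun _ _ => rfl⟩ 0
  intro p hp q hq a b ha hb hab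
  obtain rfl | ha' := ha.eq_or_lt
  · have hb1 : b = 1 := by linarith
    subst hb1; simp
  obtain rfl | hb' := hb.eq_or_lt
  · have ha1 : a = 1 := by linarith
    subst ha1; simp
  have hp1 : (0:ℝ) < p.1 := hp
  have hq1 : (0:ℝ) < q.1 := hq
  set r := a • p + b • q with hrdef
  have hr1 : r.1 = a * p.1 + b * q.1 := rfl
  have hrpos : 0 < r.1 := by rw [hr1]; positivity
  set V := (hM r).eigenvectorUnitary with hVdef
  set W := (V : Matrix (Fin n) (Fin n) ℂ) with hWdef
  set E : (ℝ × (Fin m → ℝ)) → Matrix (Fin n) (Fin n) ℂ :=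
    fun x => star W * ((∑ j, x.2 j • X j) - H) * W with hEdef
  have hNE : ∀ x : ℝ × (Fin m → ℝ), star W * M x * W = (k * x.1)⁻¹ • E x := by
    intro x
    rw [hMdef, hEdef]
    simp only [Matrix.mul_smul, Matrix.smul_mul]
  set f₁ : Fin n → ℝ := fun i => ((star W * M p * W) i i).re with hf₁
  set f₂ : Fin n → ℝ := fun i => ((star W * M q * W) i i).re with hf₂
  -- affine identity for E
  have hEaff : E r = a • E p + b • E q := by
    rw [hEdef]
    simp only []
    have hBaff : (∑ j, r.2 j • X j) - H
        = a • ((∑ j, p.2 j • X j) - H) + b • ((∑ j, q.2 j • X j) - H) := by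
      have hr2 : ∀ j, r.2 j = a * p.2 j + b * q.2 j := fun j => rfl
      rw [smul_sub, smul_sub]
      have h1 : ∑ j, r.2 j • X j = a • (∑ j, p.2 j • X j) + b • (∑ j, q.2 j • X j) := by
        rw [Finset.smul_sum, Finset.smul_sum, ← Finset.sum_add_distrib]
        refine Finset.sum_congr rfl fun j _ => ?_
        rw [hr2 j, add_smul, smul_smul, smul_smul]
      have h2 : a • H + b • H = H := by rw [← add_smul, hab, one_smul]
      rw [h1]
      conv_lhs => rw [← h2]
      abel
    rw [hBaff, Matrix.mul_add, Matrix.add_mul, Matrix.mul_smul, Matrix.smul_mul,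
      Matrix.mul_smul, Matrix.smul_mul]
  -- center diag entries
  have hcenter : ∀ i, ((star W * M r * W) i i).re
      = (a * p.1 * f₁ i + b * q.1 * f₂ i) / (a * p.1 + b * q.1) := by
    intro i
    have hre : ∀ (x : ℝ × (Fin m → ℝ)) (hx : 0 < x.1),
        ((star W * M x * W) i i).re = (k * x.1)⁻¹ * ((E x) i i).re := by
      intro x hx
      rw [hNE x]
      have : ((k * x.1)⁻¹ • E x) i i = ((k * x.1)⁻¹ : ℝ) • ((E x) i i) := rfl
      rw [this, Complex.real_smul, Complex.re_ofReal_mul]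
    have hEr : ((E r) i i).re = a * ((E p) i i).re + b * ((E q) i i).re := by
      rw [hEaff]
      have : (a • E p + b • E q) i i = a • ((E p) i i) + b • ((E q) i i) := rfl
      rw [this, Complex.add_re, Complex.real_smul, Complex.real_smul,
        Complex.re_ofReal_mul, Complex.re_ofReal_mul]
    have hfp : ((E p) i i).re = (k * p.1) * f₁ i := by
      rw [hf₁]
      simp only []
      rw [hre p hp1]
      field_simp
    have hfq : ((E q) i i).re = (k * q.1) * f₂ i := by
      rw [hf₂]
      simp only []
      rw [hre q hq1]
      field_simp
    rw [hre r hrpos, hEr, hfp, hfq, hr1]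
    have hk' : k ≠ 0 := hk.ne'
    field_simp
  -- eigenvalue identity at center
  have hdiagr : ∀ i, ((star W * M r * W) i i).re = (hM r).eigenvalues i := by
    intro i
    rw [hWdef, hVdef]
    have hdg := (hM r).conjStarAlgAut_star_eigenvectorUnitary
    rw [Unitary.conjStarAlgAut_star_apply] at hdg
    rw [hdg]
    simp [Matrix.diagonal]
  -- trace identities
  have htrconj : ∀ x : ℝ × (Fin m → ℝ),
      (Matrix.trace (NormedSpace.exp (star W * M x * W))).re
        = (Matrix.trace (NormedSpace.exp (M x))).re :=
    fun x => congrArg Complex.re (trace_exp_conj (M x) V)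
  have hne : (Finset.univ : Finset (Fin n)).Nonempty := by
    have : Nonempty (Fin n) := Fin.pos_iff_nonempty.mp hn
    exact Finset.univ_nonempty
  -- center value equality
  have hcval : (Matrix.trace (NormedSpace.exp (M r))).re
      = ∑ i, Real.exp ((a * p.1 * f₁ i + b * q.1 * f₂ i) / (a * p.1 + b * q.1)) := by
    rw [trace_exp_re (M r) (hM r)]
    refine Finset.sum_congr rfl fun i _ => ?_
    rw [← hcenter i, hdiagr i]
  -- Peierls at p and q
  have hPp : ∑ i, Real.exp (f₁ i) ≤ (Matrix.trace (NormedSpace.exp (M p))).re := by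
    rw [← htrconj p]
    exact peierls _ (hermitian_conj (M p) (hM p) V)
  have hPq : ∑ i, Real.exp (f₂ i) ≤ (Matrix.trace (NormedSpace.exp (M q))).re := by
    rw [← htrconj q]
    exact peierls _ (hermitian_conj (M q) (hM q) V)
  have hSp : 0 < ∑ i, Real.exp (f₁ i) := Finset.sum_pos (fun i _ => Real.exp_pos _) hne
  have hSq : 0 < ∑ i, Real.exp (f₂ i) := Finset.sum_pos (fun i _ => Real.exp_pos _) hne
  -- main chain
  simp only [Set.mem_setOf_eq] at *
  rw [hobj p, hobj q, hobj r]
  have hper := perspective_lse hn hp1 hq1 ha' hb' hab f₁ f₂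
  have hlogp : Real.log (∑ i, Real.exp (f₁ i))
      ≤ Real.log ((Matrix.trace (NormedSpace.exp (M p))).re) := Real.log_le_log hSp hPp
  have hlogq : Real.log (∑ i, Real.exp (f₂ i))
      ≤ Real.log ((Matrix.trace (NormedSpace.exp (M q))).re) := Real.log_le_log hSq hPq
  have key : r.1 * Real.log ((Matrix.trace (NormedSpace.exp (M r))).re)
      ≤ a * p.1 * Real.log ((Matrix.trace (NormedSpace.exp (M p))).re)
        + b * q.1 * Real.log ((Matrix.trace (NormedSpace.exp (M q))).re) := by
    rw [hcval, hr1]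
    calc (a * p.1 + b * q.1) * Real.log (∑ i, Real.exp
            ((a * p.1 * f₁ i + b * q.1 * f₂ i) / (a * p.1 + b * q.1)))
        ≤ a * p.1 * Real.log (∑ i, Real.exp (f₁ i))
          + b * q.1 * Real.log (∑ i, Real.exp (f₂ i)) := hper
      _ ≤ _ := by
          have h1 : 0 ≤ a * p.1 := by positivity
          have h2 : 0 ≤ b * q.1 := by positivity
          exact add_le_add (mul_le_mul_of_nonneg_left hlogp h1)
            (mul_le_mul_of_nonneg_left hlogq h2)
  calc κ * r.1 * Real.log ((Matrix.trace (NormedSpace.exp (M r))).re)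
      = κ * (r.1 * Real.log ((Matrix.trace (NormedSpace.exp (M r))).re)) := by ring
    _ ≤ κ * (a * p.1 * Real.log ((Matrix.trace (NormedSpace.exp (M p))).re)
        + b * q.1 * Real.log ((Matrix.trace (NormedSpace.exp (M q))).re)) :=
          mul_le_mul_of_nonneg_left key hκ.le
    _ = a * (κ * p.1 * Real.log ((Matrix.trace (NormedSpace.exp (M p))).re))
        + b * (κ * q.1 * Real.log ((Matrix.trace (NormedSpace.exp (M q))).re)) := by ring
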